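/- arXiv:2110.00964 — 3 statements merged into one kernel-verified Lean document; each statement's English description precedes it below -/
import Mathlib

section
/- Let $Q_0 \subset \mathbb{R}^n$ be a cube and $f \in L^1(Q_0)$. If $\sup_{Q \subset Q_0} \frac{1}{|Q|}\int_Q \big| f(x) - |f|_Q \big| \, dx =: \|f\|_{\bar{\mathcal{L}}^{1,n}} < \infty$, then $f \in BMO(Q_0)$ with $\sup_{Q \subset Q_0} \frac{1}{|Q|}\int_Q |f(x) - f_Q| \, dx \leq 2 \|f\|_{\bar{\mathcal{L}}^{1,n}}$, and moreover $\|f^-\|_{L^\infty(Q_0)} \leq \frac{1}{2}\|f\|_{\bar{\mathcal{L}}^{1,n}}$. -/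
open MeasureTheory

/-- The axis-parallel cube centered at `x` with side length `2 * ρ`. -/
def cube (n : ℕ) (x : Fin n → ℝ) (ρ : ℝ) : Set (Fin n → ℝ) := {y | ∀ i, |y i - x i| ≤ ρ}

lemma cube_eq_closedBall (n : ℕ) (c : Fin n → ℝ) {r : ℝ} (hr : 0 ≤ r) :
    cube n c r = Metric.closedBall c r := by
  ext y
  simp only [cube, Set.mem_setOf_eq, Metric.mem_closedBall, dist_pi_le_iff hr, Real.dist_eq]

lemma cube_volume (n : ℕ) (c : Fin n → ℝ) {r : ℝ} (hr : 0 ≤ r) :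
    volume (cube n c r) = ENNReal.ofReal ((2 * r) ^ n) := by
  rw [cube_eq_closedBall n c hr, Real.volume_pi_closedBall c hr, Fintype.card_fin]

lemma cube_key (n : ℕ) (c : Fin n → ℝ) {r : ℝ} (hr : 0 < r) (f : (Fin n → ℝ) → ℝ)
    (hfQ : IntegrableOn f (cube n c r)) {N : ℝ}
    (hN : ⨍ x in cube n c r, (abs (f x - ⨍ y in cube n c r, |f y|)) ≤ N) :
    (⨍ x in cube n c r, (abs (f x - ⨍ y in cube n c r, f y)) ≤ 2 * N) ∧
    (⨍ x in cube n c r, max (-f x) 0 ≤ N / 2) := by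
  set Q := cube n c r with hQdef
  have hvol : volume Q = ENNReal.ofReal ((2 * r) ^ n) := cube_volume n c hr.le
  set V := (volume Q).toReal with hVdef
  have hV : 0 < V := by
    rw [hVdef, hvol, ENNReal.toReal_ofReal (by positivity)]; positivity
  have hfin : volume Q < ⊤ := by rw [hvol]; exact ENNReal.ofReal_lt_top
  set A := ∫ x in Q, |f x| with hAdef
  set F := ∫ x in Q, f x with hFdef
  set a := ⨍ y in Q, |f y| with hadef
  set m := ⨍ y in Q, f y with hmdef
  have ha : a = V⁻¹ * A := by rw [hadef, setAverage_eq, smul_eq_mul, measureReal_def, ← hVdef, ← hAdef]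
  have hm : m = V⁻¹ * F := by rw [hmdef, setAverage_eq, smul_eq_mul, measureReal_def, ← hVdef, ← hFdef]
  have habs : IntegrableOn (fun x => |f x|) Q := hfQ.abs
  have hconst : ∀ b : ℝ, IntegrableOn (fun _ => b) Q :=
    fun b => integrableOn_const hfin.ne
  have hfa : IntegrableOn (fun x => |f x - a|) Q := (hfQ.sub (hconst a)).abs
  have hfm : IntegrableOn (fun x => |f x - m|) Q := (hfQ.sub (hconst m)).abs
  -- the hypothesis as an integral bound
  have h1 : ∫ x in Q, |f x - a| ≤ N * V := by
    have h := hN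
    rw [setAverage_eq, smul_eq_mul, measureReal_def, ← hVdef] at h
    calc ∫ x in Q, |f x - a| = V * (V⁻¹ * ∫ x in Q, |f x - a|) := by
          field_simp
      _ ≤ V * N := mul_le_mul_of_nonneg_left h hV.le
      _ = N * V := mul_comm _ _
  have hAFnn : 0 ≤ A - F := by
    have : F ≤ A := integral_mono hfQ habs (fun x => le_abs_self _)
    linarith
  have hVa : V * a = A := by rw [ha]; field_simp
  have hAF : ∫ x in Q, (a - f x) = A - F := by
    rw [integral_sub (hconst a) hfQ, setIntegral_const, smul_eq_mul, measureReal_def, ← hVdef, hVa, ← hFdef]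
  have h2 : A - F ≤ N * V := by
    rw [← hAF]
    calc ∫ x in Q, (a - f x) ≤ ∫ x in Q, |f x - a| := by
          refine integral_mono ((hconst a).sub hfQ) hfa (fun x => ?_)
          calc a - f x ≤ |a - f x| := le_abs_self _
            _ = |f x - a| := abs_sub_comm _ _
      _ ≤ N * V := h1
  constructor
  · -- BMO bound
    have ham' : a - m = V⁻¹ * (A - F) := by rw [ha, hm]; ring
    have ham : |a - m| = V⁻¹ * (A - F) := by
      rw [ham', abs_of_nonneg (mul_nonneg (inv_nonneg.2 hV.le) hAFnn)]
    have hVam : V * |a - m| = A - F := by rw [ham]; field_simp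
    have hint : ∫ x in Q, |f x - m| ≤ 2 * N * V := by
      calc ∫ x in Q, |f x - m| ≤ ∫ x in Q, (|f x - a| + |a - m|) := by
            refine integral_mono hfm (hfa.add (hconst _)) (fun x => ?_)
            exact abs_sub_le (f x) a m
        _ = (∫ x in Q, |f x - a|) + V * |a - m| := by
            rw [integral_add hfa (hconst _), setIntegral_const, smul_eq_mul, measureReal_def, ← hVdef]
        _ ≤ N * V + (A - F) := by rw [hVam]; linarith
        _ ≤ N * V + N * V := by linarith
        _ = 2 * N * V := by ring
    rw [setAverage_eq, smul_eq_mul, measureReal_def, ← hVdef]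
    calc V⁻¹ * ∫ x in Q, |f x - m| ≤ V⁻¹ * (2 * N * V) :=
          mul_le_mul_of_nonneg_left hint (inv_nonneg.2 hV.le)
      _ = 2 * N := by field_simp
  · -- negative part bound
    have hmax : ∀ x : (Fin n → ℝ), max (-f x) 0 = (|f x| - f x) / 2 := by
      intro x
      rcases le_total 0 (f x) with h | h
      · rw [abs_of_nonneg h, max_eq_right (neg_nonpos.2 h)]; ring
      · rw [abs_of_nonpos h, max_eq_left (by linarith : (0:ℝ) ≤ -f x)]; ring
    have hint : ∫ x in Q, max (-f x) 0 = (A - F) / 2 := by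
      simp_rw [hmax]
      rw [integral_div, integral_sub habs hfQ, ← hAdef, ← hFdef]
    rw [setAverage_eq, smul_eq_mul, measureReal_def, ← hVdef, hint]
    calc V⁻¹ * ((A - F) / 2) ≤ V⁻¹ * (N * V / 2) := by
          refine mul_le_mul_of_nonneg_left (by linarith) (inv_nonneg.2 hV.le)
      _ = N / 2 := by field_simp

theorem barL_implies_BMO_and_negPart_bounded (n : ℕ) (x0 : Fin n → ℝ) (r0 : ℝ) (hr0 : 0 < r0)
    (f : (Fin n → ℝ) → ℝ) (hf : IntegrableOn f (cube n x0 r0)) (N : ℝ)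
    (hN : ∀ c r, 0 < r → cube n c r ⊆ cube n x0 r0 →
      ⨍ x in cube n c r, (abs (f x - ⨍ y in cube n c r, |f y|)) ≤ N) :
    (∀ c r, 0 < r → cube n c r ⊆ cube n x0 r0 →
      ⨍ x in cube n c r, (abs (f x - ⨍ y in cube n c r, f y)) ≤ 2 * N) ∧
    (∀ᵐ x ∂(volume.restrict (cube n x0 r0)), max (-f x) 0 ≤ N / 2) := by
  constructor
  · intro c r hr hsub
    exact (cube_key n c hr f (hf.mono_set hsub) (hN c r hr hsub)).1
  · set Q0 := cube n x0 r0 with hQ0def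
    have hQ0ball : Q0 = Metric.closedBall x0 r0 := cube_eq_closedBall n x0 hr0.le
    have hQ0meas : MeasurableSet Q0 := by rw [hQ0ball]; exact measurableSet_closedBall
    set g : (Fin n → ℝ) → ℝ := Q0.indicator (fun x => max (-f x) 0) with hgdef
    have hg_int : Integrable g volume := MeasureTheory.IntegrableOn.integrable_indicator hf.neg_part hQ0meas
    have hg_loc : LocallyIntegrable g volume := hg_int.locallyIntegrable
    have hdiff := (Besicovitch.vitaliFamily (volume : Measure (Fin n → ℝ))).ae_tendsto_average hg_loc
    have hnull : volume (Q0 \ Metric.ball x0 r0) = 0 := by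
      rw [hQ0ball, measure_diff Metric.ball_subset_closedBall
        measurableSet_ball.nullMeasurableSet
        (by rw [Real.volume_pi_ball x0 hr0]; exact ENNReal.ofReal_ne_top),
        Real.volume_pi_closedBall x0 hr0.le, Real.volume_pi_ball x0 hr0, tsub_self]
    have hball : ∀ᵐ x ∂(volume.restrict Q0), x ∈ Metric.ball x0 r0 := by
      rw [ae_restrict_iff' hQ0meas, ae_iff]
      refine measure_mono_null ?_ hnull
      intro x hx
      simp only [Set.mem_setOf_eq] at hx
      push_neg at hx
      exact ⟨hx.1, hx.2⟩
    filter_upwards [ae_restrict_of_ae hdiff, hball, ae_restrict_mem hQ0meas]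
      with x hx hxball hxQ0
    have hgx : g x = max (-f x) 0 := Set.indicator_of_mem hxQ0 _
    have T : Filter.Tendsto (fun ρ => ⨍ y in Metric.closedBall x ρ, g y)
        (nhdsWithin 0 (Set.Ioi 0)) (nhds (g x)) :=
      hx.comp (Besicovitch.tendsto_filterAt volume x)
    have hxdist : dist x x0 < r0 := Metric.mem_ball.1 hxball
    have hεpos : 0 < r0 - dist x x0 := by linarith
    have hev : ∀ᶠ ρ in nhdsWithin (0:ℝ) (Set.Ioi 0),
        (fun ρ => ⨍ y in Metric.closedBall x ρ, g y) ρ ≤ N / 2 := by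
      filter_upwards [Ioc_mem_nhdsGT_of_mem (Set.mem_Ico.2 ⟨le_rfl, hεpos⟩)] with ρ hρ
      obtain ⟨hρ0, hρε⟩ := hρ
      have hsub : cube n x ρ ⊆ Q0 := by
        rw [cube_eq_closedBall n x hρ0.le, hQ0ball]
        exact Metric.closedBall_subset_closedBall' (by linarith)
      have hkey := (cube_key n x hρ0 f (hf.mono_set hsub) (hN x ρ hρ0 hsub)).2
      have hcongr : ⨍ y in Metric.closedBall x ρ, g y = ⨍ y in cube n x ρ, max (-f y) 0 := by
        rw [cube_eq_closedBall n x hρ0.le, setAverage_eq, setAverage_eq]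
        congr 1
        refine setIntegral_congr_fun measurableSet_closedBall (fun y hy => ?_)
        exact Set.indicator_of_mem (hsub (by rwa [cube_eq_closedBall n x hρ0.le])) _
      rw [hcongr]
      exact hkey
    have := le_of_tendsto T hev
    rwa [hgx] at this
end

section
/- Let $Q_0 \subset \mathbb{R}^n$ be a cube and $f \in L^1(Q_0)$. If there exists a constant $C$ such that $\frac{1}{|Q|}\int_Q \big| |f(x)| - f_Q \big| \, dx \leq C$ for all subcubes $Q \subset Q_0$, then $\frac{1}{|Q|}\int_Q \big| f(x) - |f|_Q \big| \, dx \leq 3C$ for all subcubes $Q \subset Q_0$. -/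
open MeasureTheory

lemma cube_eq_pi (n : ℕ) (c : Fin n → ℝ) (r : ℝ) :
    cube n c r = Set.pi Set.univ (fun i => Set.Icc (c i - r) (c i + r)) := by
  ext y
  simp only [cube, Set.mem_setOf_eq, Set.mem_pi, Set.mem_univ, Set.mem_Icc, forall_true_left,
    abs_le]
  constructor <;> intro h i <;> obtain ⟨h1, h2⟩ := h i <;> constructor <;> linarith

lemma volume_cube (n : ℕ) (c : Fin n → ℝ) (r : ℝ) (hr : 0 < r) :
    volume (cube n c r) = ENNReal.ofReal (2 * r) ^ n := by
  rw [cube_eq_pi, volume_pi_pi]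
  simp [Real.volume_Icc]
  ring_nf
  rw [ENNReal.ofReal_mul hr.le, mul_pow, ENNReal.ofReal_ofNat]

theorem abs_osc_implies_barL (n : ℕ) (x0 : Fin n → ℝ) (r0 : ℝ) (hr0 : 0 < r0)
    (f : (Fin n → ℝ) → ℝ) (hf : IntegrableOn f (cube n x0 r0)) (C : ℝ)
    (hC : ∀ c r, 0 < r → cube n c r ⊆ cube n x0 r0 →
      ⨍ x in cube n c r, (abs (|f x| - ⨍ y in cube n c r, f y)) ≤ C) :
    ∀ c r, 0 < r → cube n c r ⊆ cube n x0 r0 →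
      ⨍ x in cube n c r, (abs (f x - ⨍ y in cube n c r, |f y|)) ≤ 3 * C := by
  intro c r hr hsub
  set Q := cube n c r with hQ
  have hvol : volume Q = ENNReal.ofReal (2 * r) ^ n := volume_cube n c r hr
  have hμ0 : volume Q ≠ 0 := by
    rw [hvol]
    positivity
  have hμT : volume Q ≠ ⊤ := by
    rw [hvol]
    exact ENNReal.pow_ne_top ENNReal.ofReal_ne_top
  set V := (volume Q).toReal with hV
  have hVpos : 0 < V := ENNReal.toReal_pos hμ0 hμT
  have hfi : IntegrableOn f Q := hf.mono_set hsub
  have hfia : IntegrableOn (fun x => |f x|) Q := hfi.abs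
  set a := ⨍ y in Q, f y with ha
  set b := ⨍ y in Q, |f y| with hb
  -- averages as scaled integrals
  have haeq : a = V⁻¹ * ∫ y in Q, f y := setAverage_eq volume f Q
  have hbeq : b = V⁻¹ * ∫ y in Q, |f y| := setAverage_eq volume _ Q
  -- integrability of auxiliary functions
  have hconst : ∀ t : ℝ, IntegrableOn (fun _ => t) Q :=
    fun t => integrableOn_const hμT
  have hfa : IntegrableOn (fun x => |(|f x| - a)|) Q := ((hfia.sub (hconst a))).abs
  -- step 1 : |b - a| ≤ C
  have hCa : ⨍ x in Q, |(|f x| - a)| ≤ C := hC c r hr hsub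
  have hCa' : V⁻¹ * ∫ x in Q, |(|f x| - a)| ≤ C := by
    rw [setAverage_eq volume _ Q, smul_eq_mul] at hCa; exact hCa
  have hba : |b - a| ≤ C := by
    have h1 : ∫ x in Q, (|f x| - a) = (∫ x in Q, |f x|) - V * a := by
      rw [integral_sub hfia (hconst a), setIntegral_const, smul_eq_mul]
      rfl
    have h2 : b - a = V⁻¹ * ∫ x in Q, (|f x| - a) := by
      rw [h1, mul_sub, ← hbeq]
      field_simp
    rw [h2, abs_mul, abs_of_nonneg (inv_nonneg.2 hVpos.le)]
    calc V⁻¹ * |∫ x in Q, (|f x| - a)| ≤ V⁻¹ * ∫ x in Q, |(|f x| - a)| := by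
          apply mul_le_mul_of_nonneg_left _ (inv_nonneg.2 hVpos.le)
          simpa [Real.norm_eq_abs] using
            norm_integral_le_integral_norm (μ := volume.restrict Q) (fun x => |f x| - a)
      _ ≤ C := hCa'
  -- step 2 : pointwise bound and conclusion
  have hpt : ∀ x, |f x - b| ≤ (|f x| - f x) + |(|f x| - a)| + |a - b| := by
    intro x
    have : f x - b = -((|f x| - f x)) + ((|f x| - a)) + (a - b) := by ring
    calc |f x - b| = |(-((|f x| - f x)) + ((|f x| - a)) + (a - b))| := by rw [← this]
      _ ≤ |(-((|f x| - f x)))| + |(|f x| - a)| + |a - b| := by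
          exact (abs_add_le _ _).trans (add_le_add_left (abs_add_le _ _) _)
      _ ≤ (|f x| - f x) + |(|f x| - a)| + |a - b| := by
          have h1 : |(-((|f x| - f x)))| = |f x| - f x := by
            rw [abs_neg, abs_of_nonneg]; linarith [le_abs_self (f x)]
          rw [h1]
  have hint1 : IntegrableOn (fun x => |f x - b|) Q := (hfi.sub (hconst b)).abs
  have hI1 : IntegrableOn (fun x => |f x| - f x) Q := hfia.sub hfi
  have hI2 : IntegrableOn (fun x => |f x| - f x + |(|f x| - a)|) Q := hI1.add hfa
  have hint2 : IntegrableOn (fun x => (|f x| - f x) + |(|f x| - a)| + |a - b|) Q :=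
    hI2.add (hconst _)
  have hmono : ∫ x in Q, |f x - b| ≤
      ∫ x in Q, ((|f x| - f x) + |(|f x| - a)| + |a - b|) :=
    integral_mono hint1 hint2 hpt
  have hsumint : ∫ x in Q, ((|f x| - f x) + |(|f x| - a)| + |a - b|)
      = ((∫ x in Q, |f x|) - ∫ x in Q, f x) + (∫ x in Q, |(|f x| - a)|) + V * |a - b| := by
    rw [integral_add hI2 (hconst _), integral_add hI1 hfa,
      integral_sub hfia hfi, setIntegral_const, smul_eq_mul]
    rfl
  rw [setAverage_eq volume _ Q, smul_eq_mul]
  calc V⁻¹ * ∫ x in Q, |f x - b|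
      ≤ V⁻¹ * (((∫ x in Q, |f x|) - ∫ x in Q, f x) + (∫ x in Q, |(|f x| - a)|) + V * |a - b|) := by
        apply mul_le_mul_of_nonneg_left _ (inv_nonneg.2 hVpos.le)
        rw [← hsumint]; exact hmono
    _ = (b - a) + V⁻¹ * (∫ x in Q, |(|f x| - a)|) + |a - b| := by
        rw [haeq, hbeq]; field_simp
    _ ≤ C + C + C := by
        have h1 : b - a ≤ C := le_trans (le_abs_self _) hba
        have h2 : |a - b| ≤ C := by rwa [abs_sub_comm]
        exact add_le_add (add_le_add h1 hCa') h2
    _ = 3 * C := by ring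
end

section
/- Let $1 < p, p_1, p_2 < \infty$ with $1/p = 1/p_1 + 1/p_2$, and let $b_1, b_2 \in L^1_{loc}(\mathbb{R}^n)$. Define the bilinear maximal operator $\mathcal{M}(f_1,f_2)(x) = \sup_{Q \ni x} \prod_{i=1}^2 \frac{1}{|Q|}\int_Q |f_i|$ and the linear commutator $[\Sigma\vec{b},\mathcal{M}](f_1,f_2) = (b_1+b_2)\mathcal{M}(f_1,f_2) - \mathcal{M}(b_1f_1,f_2) - \mathcal{M}(f_1,b_2f_2)$. If $[\Sigma\vec{b},\mathcal{M}]$ is bounded from $L^{p_1}(\mathbb{R}^n) \times L^{p_2}(\mathbb{R}^n)$ to $L^p(\mathbb{R}^n)$ with norm $K$, then for every cube $Q$, $\frac{1}{|Q|}\int_Q |b_1(x) - M_Q(b_1)(x)| \, dx \leq K$ and $\frac{1}{|Q|}\int_Q |b_2(x) - M_Q(b_2)(x)| \, dx \leq K$. -/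
open MeasureTheory ENNReal

/-- The local Hardy–Littlewood maximal function over subcubes of `cube n Qc Qr`. -/
noncomputable def locMax (n : ℕ) (Qc : Fin n → ℝ) (Qr : ℝ) (f : (Fin n → ℝ) → ℝ)
    (x : Fin n → ℝ) : ℝ≥0∞ :=
  ⨆ (c : Fin n → ℝ) (r : ℝ) (_ : 0 < r) (_ : cube n c r ⊆ cube n Qc Qr)
    (_ : x ∈ cube n c r),
      (volume (cube n c r))⁻¹ * ∫⁻ y in cube n c r, ENNReal.ofReal |f y|

/-- The bilinear maximal operator `ℳ(f₁,f₂)(x) = sup_{Q ∋ x} ∏ᵢ (1/|Q|) ∫_Q |fᵢ|`. -/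
noncomputable def biMax (n : ℕ) (f1 f2 : (Fin n → ℝ) → ℝ) (x : Fin n → ℝ) : ℝ≥0∞ :=
  ⨆ (c : Fin n → ℝ) (r : ℝ) (_ : 0 < r) (_ : x ∈ cube n c r),
    ((volume (cube n c r))⁻¹ * ∫⁻ y in cube n c r, ENNReal.ofReal |f1 y|) *
    ((volume (cube n c r))⁻¹ * ∫⁻ y in cube n c r, ENNReal.ofReal |f2 y|)

/-- The linear commutator `[Σ b⃗, ℳ](f₁,f₂) = (b₁+b₂)ℳ(f₁,f₂) - ℳ(b₁f₁,f₂) - ℳ(f₁,b₂f₂)`. -/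
noncomputable def biMaxCommutator (n : ℕ) (b1 b2 f1 f2 : (Fin n → ℝ) → ℝ)
    (x : Fin n → ℝ) : ℝ :=
  (b1 x + b2 x) * (biMax n f1 f2 x).toReal
    - (biMax n (fun y => b1 y * f1 y) f2 x).toReal
    - (biMax n f1 (fun y => b2 y * f2 y) x).toReal

namespace BiMaxAux

open Metric Filter Set

variable {n : ℕ}

lemma cube_eq_closedBall (c : Fin n → ℝ) {r : ℝ} (hr : 0 ≤ r) :
    cube n c r = closedBall c r := by
  ext y
  simp only [cube, mem_setOf_eq, mem_closedBall, dist_pi_le_iff hr, Real.dist_eq]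

lemma volume_cube (c : Fin n → ℝ) {r : ℝ} (hr : 0 ≤ r) :
    volume (cube n c r) = ENNReal.ofReal ((2 * r) ^ n) := by
  rw [cube_eq_closedBall c hr, Real.volume_pi_closedBall c hr, Fintype.card_fin]

lemma volume_cube_ne_zero (c : Fin n → ℝ) {r : ℝ} (hr : 0 < r) :
    volume (cube n c r) ≠ 0 := by
  rw [volume_cube c hr.le]
  simp only [ne_eq, ENNReal.ofReal_eq_zero, not_le]
  positivity

lemma volume_cube_ne_top (c : Fin n → ℝ) {r : ℝ} (hr : 0 ≤ r) :
    volume (cube n c r) ≠ ⊤ := by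
  rw [volume_cube c hr]; exact ENNReal.ofReal_ne_top

lemma measurableSet_cube (c : Fin n → ℝ) {r : ℝ} (hr : 0 ≤ r) :
    MeasurableSet (cube n c r) := by
  rw [cube_eq_closedBall c hr]; exact measurableSet_closedBall

/-- Hölder-type inequality for `lintegral` without any measurability assumption. -/
lemma lintegral_le_rpow_mul {α : Type*} [MeasurableSpace α] (μ : Measure α)
    (F : α → ℝ≥0∞) {p q : ℝ} (hpq : p.HolderConjugate q) :
    ∫⁻ a, F a ∂μ ≤ (∫⁻ a, F a ^ p ∂μ) ^ (1 / p) * (μ Set.univ) ^ (1 / q) := by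
  rw [MeasureTheory.lintegral_def]
  refine iSup₂_le fun g hg => ?_
  have H := ENNReal.lintegral_mul_le_Lp_mul_Lq μ hpq (f := ⇑g) (g := fun _ => (1 : ℝ≥0∞))
    g.measurable.aemeasurable aemeasurable_const
  simp only [Pi.mul_apply, mul_one, ENNReal.one_rpow, lintegral_const, one_mul] at H
  calc g.lintegral μ = ∫⁻ a, g a ∂μ := (g.lintegral_eq_lintegral μ).symm
    _ ≤ (∫⁻ a, g a ^ p ∂μ) ^ (1 / p) * (μ Set.univ) ^ (1 / q) := H
    _ ≤ (∫⁻ a, F a ^ p ∂μ) ^ (1 / p) * (μ Set.univ) ^ (1 / q) :=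
        mul_le_mul_left (ENNReal.rpow_le_rpow
          (lintegral_mono fun a => ENNReal.rpow_le_rpow (hg a) hpq.nonneg)
          hpq.one_div_nonneg) _

lemma ofReal_avg {α : Type*} [MeasurableSpace α] {μ : Measure α} {B : Set α}
    (h0 : μ B ≠ 0) (ht : μ B ≠ ⊤) {u : α → ℝ} (hu : IntegrableOn u B μ) :
    ENNReal.ofReal (⨍ y in B, |u y| ∂μ) = (μ B)⁻¹ * ∫⁻ y in B, ENNReal.ofReal |u y| ∂μ := by
  rw [setAverage_eq, smul_eq_mul, measureReal_def, ENNReal.ofReal_mul (inv_nonneg.2 ENNReal.toReal_nonneg),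
    ofReal_integral_eq_lintegral_ofReal hu.abs (Eventually.of_forall fun y => abs_nonneg _),
    ENNReal.ofReal_inv_of_pos (ENNReal.toReal_pos h0 ht), ENNReal.ofReal_toReal ht]

/-- A.e. finiteness of the (uncentered) cube maximal function of an integrable function. -/
lemma exists_bound (h : (Fin n → ℝ) → ℝ) (hh : Integrable h volume) :
    ∀ᵐ x : Fin n → ℝ, ∃ C : ℝ≥0∞, C ≠ ⊤ ∧ ∀ c' : Fin n → ℝ, ∀ r' : ℝ, 0 < r' →
      x ∈ cube n c' r' →
      (volume (cube n c' r'))⁻¹ * ∫⁻ y in cube n c' r', ENNReal.ofReal |h y| ≤ C := by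
  have habs : LocallyIntegrable (fun y => |h y|) volume := by
    simpa [Real.norm_eq_abs] using hh.norm.locallyIntegrable
  filter_upwards [IsUnifLocDoublingMeasure.ae_tendsto_average
    (volume : Measure (Fin n → ℝ)) habs 1] with x hx
  have key : ∃ ε > (0 : ℝ), ∀ c' : Fin n → ℝ, ∀ r' : ℝ, 0 < r' → r' ≤ ε →
      x ∈ closedBall c' r' → ⨍ y in closedBall c' r', |h y| ≤ |h x| + 1 := by
    by_contra hcon
    push_neg at hcon
    choose w δ hδ0 hδle hmem hgt using fun k : ℕ =>
      hcon (1 / ((k : ℝ) + 1)) (by positivity)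
    have hδtend : Tendsto δ atTop (nhdsWithin 0 (Set.Ioi 0)) := by
      refine tendsto_nhdsWithin_of_tendsto_nhds_of_eventually_within δ ?_
        (Eventually.of_forall fun k => hδ0 k)
      exact squeeze_zero (fun k => (hδ0 k).le) hδle tendsto_one_div_add_atTop_nhds_zero_nat
    have htend := hx w δ hδtend (Eventually.of_forall fun k => by
      rw [one_mul]; exact hmem k)
    have hev : ∀ᶠ k in atTop, ⨍ y in closedBall (w k) (δ k), |h y| < |h x| + 1 :=
      htend.eventually_lt_const (lt_add_one _)
    rcases hev.exists with ⟨k, hk⟩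
    exact absurd (hgt k) (not_lt.2 hk.le)
  obtain ⟨ε, hε, hbnd⟩ := key
  have hfin : ∫⁻ y, ENNReal.ofReal |h y| ∂(volume : Measure (Fin n → ℝ)) ≠ ⊤ := by
    have := hh.hasFiniteIntegral
    rw [HasFiniteIntegral] at this
    simp only [← Real.enorm_eq_ofReal_abs]
    exact this.ne
  refine ⟨max (ENNReal.ofReal (|h x| + 1))
    ((ENNReal.ofReal ((2 * ε) ^ n))⁻¹ * ∫⁻ y, ENNReal.ofReal |h y|), ?_, ?_⟩
  · rw [ne_eq, max_eq_top, not_or]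
    refine ⟨ENNReal.ofReal_ne_top, ENNReal.mul_ne_top ?_ hfin⟩
    rw [ne_eq, ENNReal.inv_eq_top, ENNReal.ofReal_eq_zero, not_le]
    positivity
  · intro c' r' hr' hxmem
    rw [cube_eq_closedBall c' hr'.le] at hxmem ⊢
    rcases le_or_gt r' ε with hle | hlt
    · have havg := hbnd c' r' hr' hle hxmem
      have h0 : volume (closedBall c' r') ≠ 0 := by
        rw [← cube_eq_closedBall c' hr'.le]; exact volume_cube_ne_zero c' hr'
      have hT : volume (closedBall c' r') ≠ ⊤ := by
        rw [← cube_eq_closedBall c' hr'.le]; exact volume_cube_ne_top c' hr'.le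
      calc (volume (closedBall c' r'))⁻¹ * ∫⁻ y in closedBall c' r', ENNReal.ofReal |h y|
          = ENNReal.ofReal (⨍ y in closedBall c' r', |h y|) :=
            (ofReal_avg h0 hT hh.integrableOn).symm
        _ ≤ ENNReal.ofReal (|h x| + 1) := ENNReal.ofReal_le_ofReal havg
        _ ≤ _ := le_max_left _ _
    · refine le_trans ?_ (le_max_right _ _)
      have hv : volume (closedBall c' r') = ENNReal.ofReal ((2 * r') ^ n) := by
        rw [← cube_eq_closedBall c' hr'.le]; exact volume_cube c' hr'.le
      rw [hv]
      refine mul_le_mul' ?_ (setLIntegral_le_lintegral _ _)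
      rw [ENNReal.inv_le_inv]
      exact ENNReal.ofReal_le_ofReal
        (pow_le_pow_left₀ (by positivity) (by linarith) n)

end BiMaxAux

open Metric Filter Set BiMaxAux

/-- The key averaging estimate. -/
lemma biMax_finish {α : Type*} [MeasurableSpace α] (μ : Measure α) (Q : Set α)
    (e g : α → ℝ) {p q K : ℝ} (hpq : Real.HolderConjugate p q) (hK : 0 ≤ K)
    (h0 : μ Q ≠ 0) (ht : μ Q ≠ ⊤)
    (hae : ∀ᵐ x ∂μ.restrict Q, |e x| ≤ |g x|)
    (hg : eLpNorm g (ENNReal.ofReal p) μ ≤ ENNReal.ofReal K * (μ Q) ^ (1 / p)) :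
    ⨍ x in Q, |e x| ∂μ ≤ K := by
  have hp0 : (0 : ℝ) < p := hpq.pos
  have hsnorm : (∫⁻ x, ENNReal.ofReal |g x| ^ p ∂μ) ^ (1 / p)
      = eLpNorm g (ENNReal.ofReal p) μ := by
    rw [eLpNorm_eq_lintegral_rpow_enorm_toReal (by simp [ENNReal.ofReal_eq_zero]; linarith [hpq.pos])
      ENNReal.ofReal_ne_top, ENNReal.toReal_ofReal hp0.le]
    congr 1
    refine lintegral_congr fun x => ?_
    rw [Real.enorm_eq_ofReal_abs]
  have key : ∫⁻ x in Q, ENNReal.ofReal |e x| ∂μ ≤ ENNReal.ofReal K * μ Q := by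
    calc ∫⁻ x in Q, ENNReal.ofReal |e x| ∂μ
        ≤ ∫⁻ x in Q, ENNReal.ofReal |g x| ∂μ :=
          lintegral_mono_ae (hae.mono fun x hx => ENNReal.ofReal_le_ofReal hx)
      _ ≤ (∫⁻ x in Q, ENNReal.ofReal |g x| ^ p ∂μ) ^ (1 / p) *
            ((μ.restrict Q) Set.univ) ^ (1 / q) :=
          lintegral_le_rpow_mul _ _ hpq
      _ ≤ (∫⁻ x, ENNReal.ofReal |g x| ^ p ∂μ) ^ (1 / p) * (μ Q) ^ (1 / q) := by
          rw [Measure.restrict_apply_univ]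
          gcongr
          · exact Measure.restrict_le_self
      _ ≤ (ENNReal.ofReal K * (μ Q) ^ (1 / p)) * (μ Q) ^ (1 / q) := by
          rw [hsnorm]; gcongr
      _ = ENNReal.ofReal K * μ Q := by
          rw [mul_assoc, ← ENNReal.rpow_add _ _ h0 ht]
          have : 1 / p + 1 / q = 1 := by
            simpa [one_div] using hpq.inv_add_inv_eq_inv
          rw [this, ENNReal.rpow_one]
  by_cases hInt : Integrable (fun x => |e x|) (μ.restrict Q)
  · have heq : ∫ x in Q, |e x| ∂μ = (∫⁻ x in Q, ENNReal.ofReal |e x| ∂μ).toReal :=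
      integral_eq_lintegral_of_nonneg_ae (Eventually.of_forall fun x => abs_nonneg _)
        hInt.aestronglyMeasurable
    rw [setAverage_eq, heq, smul_eq_mul]
    have hle : (∫⁻ x in Q, ENNReal.ofReal |e x| ∂μ).toReal ≤ K * (μ Q).toReal := by
      have h2 := ENNReal.toReal_mono (ENNReal.mul_ne_top ENNReal.ofReal_ne_top ht) key
      rwa [ENNReal.toReal_mul, ENNReal.toReal_ofReal hK] at h2
    have hpos : 0 < (μ Q).toReal := ENNReal.toReal_pos h0 ht
    calc ((μ Q).toReal)⁻¹ * (∫⁻ x in Q, ENNReal.ofReal |e x| ∂μ).toReal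
        ≤ ((μ Q).toReal)⁻¹ * (K * (μ Q).toReal) := by gcongr
      _ = K := by field_simp
  · rw [setAverage_eq, integral_undef hInt, smul_zero]; exact hK

theorem biMax_commutator_necessity (n : ℕ) (p p1 p2 : ℝ)
    (hp : 1 < p) (hp1 : 1 < p1) (hp2 : 1 < p2) (hsum : 1 / p = 1 / p1 + 1 / p2)
    (b1 b2 : (Fin n → ℝ) → ℝ)
    (hb1 : LocallyIntegrable b1 volume) (hb2 : LocallyIntegrable b2 volume)
    (K : ℝ) (hK : 0 ≤ K)
    (hbound : ∀ f1 f2 : (Fin n → ℝ) → ℝ,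
      MemLp f1 (ENNReal.ofReal p1) volume → MemLp f2 (ENNReal.ofReal p2) volume →
      eLpNorm (biMaxCommutator n b1 b2 f1 f2) (ENNReal.ofReal p) volume
        ≤ ENNReal.ofReal K * eLpNorm f1 (ENNReal.ofReal p1) volume
            * eLpNorm f2 (ENNReal.ofReal p2) volume) :
    ∀ c r, 0 < r →
      (⨍ x in cube n c r, (abs (b1 x - (locMax n c r b1 x).toReal)) ≤ K) ∧
      (⨍ x in cube n c r, (abs (b2 x - (locMax n c r b2 x).toReal)) ≤ K) := by
  intro c r hr
  set Q : Set (Fin n → ℝ) := cube n c r with hQ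
  have hQmeas : MeasurableSet Q := measurableSet_cube c hr.le
  have h0 : volume Q ≠ 0 := volume_cube_ne_zero c hr
  have htop : volume Q ≠ ⊤ := volume_cube_ne_top c hr.le
  set χ : (Fin n → ℝ) → ℝ := Q.indicator (fun _ => (1 : ℝ)) with hχ
  have hmem1 : MemLp χ (ENNReal.ofReal p1) volume :=
    memLp_indicator_const _ hQmeas 1 (Or.inr htop)
  have hmem2 : MemLp χ (ENNReal.ofReal p2) volume :=
    memLp_indicator_const _ hQmeas 1 (Or.inr htop)
  have hnorm : ∀ s : ℝ, 1 < s →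
      eLpNorm χ (ENNReal.ofReal s) volume = (volume Q) ^ (1 / s) := by
    intro s hs
    rw [hχ, eLpNorm_indicator_const hQmeas
      (by simp only [ne_eq, ENNReal.ofReal_eq_zero, not_le]; linarith) ENNReal.ofReal_ne_top,
      ENNReal.toReal_ofReal (by linarith : (0:ℝ) ≤ s)]
    simp
  set g : (Fin n → ℝ) → ℝ := biMaxCommutator n b1 b2 χ χ with hg
  have hgbound : eLpNorm g (ENNReal.ofReal p) volume
      ≤ ENNReal.ofReal K * (volume Q) ^ (1 / p) := by
    have hb := hbound χ χ hmem1 hmem2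
    rw [hnorm p1 hp1, hnorm p2 hp2, mul_assoc,
      ← ENNReal.rpow_add _ _ h0 htop, ← hsum] at hb
    exact hb
  -- the second factor of the bilinear maximal operator applied to `χ` is at most `1`
  have hχle : ∀ (c' : Fin n → ℝ) (r' : ℝ), 0 < r' →
      (volume (cube n c' r'))⁻¹ * ∫⁻ y in cube n c' r', ENNReal.ofReal |χ y| ≤ 1 := by
    intro c' r' hr'
    have h1 : ∫⁻ y in cube n c' r', ENNReal.ofReal |χ y| ≤ volume (cube n c' r') := by
      rw [← setLIntegral_one (cube n c' r')]
      refine lintegral_mono fun y => ?_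
      rw [← ENNReal.ofReal_one]
      refine ENNReal.ofReal_le_ofReal ?_
      rw [hχ]
      by_cases hy : y ∈ Q <;>
        simp [Set.indicator_of_mem, Set.indicator_of_notMem, hy]
    calc (volume (cube n c' r'))⁻¹ * ∫⁻ y in cube n c' r', ENNReal.ofReal |χ y|
        ≤ (volume (cube n c' r'))⁻¹ * volume (cube n c' r') := mul_le_mul_right h1 _
      _ = 1 := ENNReal.inv_mul_cancel (volume_cube_ne_zero c' hr') (volume_cube_ne_top c' hr'.le)
  have hχ_int_eq : ∀ B : Set (Fin n → ℝ), MeasurableSet B → B ⊆ Q →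
      ∫⁻ y in B, ENNReal.ofReal |χ y| = volume B := by
    intro B hB hsub
    rw [← setLIntegral_one B]
    refine setLIntegral_congr_fun hB (fun y hy => ?_)
    rw [hχ]
    simp [Set.indicator_of_mem (hsub hy)]
  have hbχ_int_eq : ∀ (b : (Fin n → ℝ) → ℝ) (B : Set (Fin n → ℝ)), MeasurableSet B → B ⊆ Q →
      ∫⁻ y in B, ENNReal.ofReal |b y * χ y| = ∫⁻ y in B, ENNReal.ofReal |b y| := by
    intro b B hB hsub
    refine setLIntegral_congr_fun hB (fun y hy => ?_)
    rw [hχ]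
    simp [Set.indicator_of_mem (hsub hy)]
  -- `biMax χ χ = 1` on `Q`
  have hMχχ : ∀ x ∈ Q, biMax n χ χ x = 1 := by
    intro x hx
    apply le_antisymm
    · refine iSup_le fun c' => iSup_le fun r' => iSup_le fun hr' => iSup_le fun _ => ?_
      calc ((volume (cube n c' r'))⁻¹ * ∫⁻ y in cube n c' r', ENNReal.ofReal |χ y|) *
            ((volume (cube n c' r'))⁻¹ * ∫⁻ y in cube n c' r', ENNReal.ofReal |χ y|)
          ≤ 1 * 1 := mul_le_mul' (hχle c' r' hr') (hχle c' r' hr')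
        _ = 1 := one_mul 1
    · have hval : (volume (cube n c r))⁻¹ * ∫⁻ y in cube n c r, ENNReal.ofReal |χ y| = 1 := by
        rw [hχ_int_eq (cube n c r) (by rw [← hQ]; exact hQmeas) (by rw [← hQ]),
          ← hQ, ENNReal.inv_mul_cancel h0 htop]
      refine le_trans ?_ (le_iSup_of_le c (le_iSup_of_le r (le_iSup_of_le hr
        (le_iSup_of_le (by rw [← hQ]; exact hx) le_rfl))))
      rw [hval, one_mul]
  -- `locMax` is dominated by the corresponding `biMax`
  have hLM1 : ∀ x ∈ Q, locMax n c r b1 x ≤ biMax n (fun y => b1 y * χ y) χ x := by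
    intro x _
    refine iSup_le fun c' => iSup_le fun r' => iSup_le fun hr' => iSup_le fun hsub =>
      iSup_le fun hx' => ?_
    have hB : MeasurableSet (cube n c' r') := measurableSet_cube c' hr'.le
    have hsub' : cube n c' r' ⊆ Q := by rw [hQ]; exact hsub
    have hval2 : (volume (cube n c' r'))⁻¹ * ∫⁻ y in cube n c' r', ENNReal.ofReal |χ y| = 1 := by
      rw [hχ_int_eq _ hB hsub', ENNReal.inv_mul_cancel (volume_cube_ne_zero c' hr')
        (volume_cube_ne_top c' hr'.le)]
    refine le_trans ?_ (le_iSup_of_le c' (le_iSup_of_le r' (le_iSup_of_le hr'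
      (le_iSup_of_le hx' le_rfl))))
    rw [hbχ_int_eq b1 _ hB hsub', hval2, mul_one]
  have hLM2 : ∀ x ∈ Q, locMax n c r b2 x ≤ biMax n χ (fun y => b2 y * χ y) x := by
    intro x _
    refine iSup_le fun c' => iSup_le fun r' => iSup_le fun hr' => iSup_le fun hsub =>
      iSup_le fun hx' => ?_
    have hB : MeasurableSet (cube n c' r') := measurableSet_cube c' hr'.le
    have hsub' : cube n c' r' ⊆ Q := by rw [hQ]; exact hsub
    have hval2 : (volume (cube n c' r'))⁻¹ * ∫⁻ y in cube n c' r', ENNReal.ofReal |χ y| = 1 := by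
      rw [hχ_int_eq _ hB hsub', ENNReal.inv_mul_cancel (volume_cube_ne_zero c' hr')
        (volume_cube_ne_top c' hr'.le)]
    refine le_trans ?_ (le_iSup_of_le c' (le_iSup_of_le r' (le_iSup_of_le hr'
      (le_iSup_of_le hx' le_rfl))))
    rw [hbχ_int_eq b2 _ hB hsub', hval2, one_mul]
  -- integrability of `b i * χ`
  have hQcomp : IsCompact Q := by
    rw [hQ, cube_eq_closedBall c hr.le]; exact isCompact_closedBall c r
  have hint : ∀ b : (Fin n → ℝ) → ℝ, LocallyIntegrable b volume →
      Integrable (fun y => b y * χ y) volume := by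
    intro b hb
    have heq : (fun y => b y * χ y) = Q.indicator b := by
      funext y
      by_cases hy : y ∈ Q <;>
        simp [hχ, Set.indicator_of_mem, Set.indicator_of_notMem, hy]
    rw [heq, integrable_indicator_iff hQmeas]
    exact hb.integrableOn_isCompact hQcomp
  -- a.e. finiteness of the two `biMax` terms
  have hfin1 : ∀ᵐ x : Fin n → ℝ, biMax n (fun y => b1 y * χ y) χ x ≠ ⊤ := by
    filter_upwards [exists_bound _ (hint b1 hb1)] with x hx
    obtain ⟨C, hC, hCb⟩ := hx
    refine ne_top_of_le_ne_top hC ?_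
    refine iSup_le fun c' => iSup_le fun r' => iSup_le fun hr' => iSup_le fun hx' => ?_
    calc ((volume (cube n c' r'))⁻¹ * ∫⁻ y in cube n c' r', ENNReal.ofReal |b1 y * χ y|) *
          ((volume (cube n c' r'))⁻¹ * ∫⁻ y in cube n c' r', ENNReal.ofReal |χ y|)
        ≤ C * 1 := mul_le_mul' (hCb c' r' hr' hx') (hχle c' r' hr')
      _ = C := mul_one C
  have hfin2 : ∀ᵐ x : Fin n → ℝ, biMax n χ (fun y => b2 y * χ y) x ≠ ⊤ := by
    filter_upwards [exists_bound _ (hint b2 hb2)] with x hx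
    obtain ⟨C, hC, hCb⟩ := hx
    refine ne_top_of_le_ne_top hC ?_
    refine iSup_le fun c' => iSup_le fun r' => iSup_le fun hr' => iSup_le fun hx' => ?_
    calc ((volume (cube n c' r'))⁻¹ * ∫⁻ y in cube n c' r', ENNReal.ofReal |χ y|) *
          ((volume (cube n c' r'))⁻¹ * ∫⁻ y in cube n c' r', ENNReal.ofReal |b2 y * χ y|)
        ≤ 1 * C := mul_le_mul' (hχle c' r' hr') (hCb c' r' hr' hx')
      _ = C := one_mul C
  -- a.e. lower bound via the Lebesgue differentiation theorem
  have hdiff : ∀ b : (Fin n → ℝ) → ℝ, LocallyIntegrable b volume →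
      ∀ᵐ x ∂volume.restrict Q, ENNReal.ofReal |b x| ≤ locMax n c r b x := by
    intro b hb
    have habs : LocallyIntegrable (fun y => |b y|) volume := by
      rw [locallyIntegrable_iff] at hb ⊢
      intro k hk
      simpa [Real.norm_eq_abs, IntegrableOn] using (hb k hk).norm
    have hball : ∀ᵐ x ∂volume.restrict Q, x ∈ ball c r := by
      rw [ae_iff]
      have hcompl : {a : Fin n → ℝ | ¬ a ∈ ball c r} = (ball c r)ᶜ := rfl
      rw [hcompl, Measure.restrict_apply (measurableSet_ball.compl)]
      refine measure_mono_null (t := Q \ ball c r) (fun x hx => ⟨hx.2, hx.1⟩) ?_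
      have hsub : ball c r ⊆ Q := by
        rw [hQ, cube_eq_closedBall c hr.le]; exact ball_subset_closedBall
      rw [measure_diff hsub measurableSet_ball.nullMeasurableSet
        (by rw [Real.volume_pi_ball c hr]; exact ENNReal.ofReal_ne_top)]
      rw [hQ, volume_cube c hr.le, Real.volume_pi_ball c hr, Fintype.card_fin, tsub_self]
    filter_upwards [hball,
      ae_restrict_of_ae (IsUnifLocDoublingMeasure.ae_tendsto_average
        (volume : Measure (Fin n → ℝ)) habs 1)] with x hxball hx
    have hs₀pos : 0 < r - dist x c := by rw [mem_ball] at hxball; linarith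
    set δ : ℕ → ℝ := fun k => min (r - dist x c) (1 / ((k : ℝ) + 1)) with hδdef
    have hδpos : ∀ k, 0 < δ k := fun k => lt_min hs₀pos (by positivity)
    have hδtend : Filter.Tendsto δ Filter.atTop (nhdsWithin 0 (Set.Ioi 0)) := by
      refine tendsto_nhdsWithin_of_tendsto_nhds_of_eventually_within δ ?_
        (Filter.Eventually.of_forall hδpos)
      exact squeeze_zero (fun k => (hδpos k).le) (fun k => min_le_right _ _)
        tendsto_one_div_add_atTop_nhds_zero_nat
    have htend := hx (fun _ => x) δ hδtend (Filter.Eventually.of_forall fun k => by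
      rw [one_mul]; exact mem_closedBall_self (hδpos k).le)
    have htend' : Filter.Tendsto (fun k => ENNReal.ofReal (⨍ y in closedBall x (δ k), |b y|))
        Filter.atTop (nhds (ENNReal.ofReal |b x|)) := ENNReal.tendsto_ofReal htend
    refine le_of_tendsto htend' (Filter.Eventually.of_forall fun k => ?_)
    have hBsub : cube n x (δ k) ⊆ cube n c r := by
      rw [cube_eq_closedBall x (hδpos k).le, cube_eq_closedBall c hr.le]
      refine closedBall_subset_closedBall' ?_
      have := min_le_left (r - dist x c) (1 / ((k : ℝ) + 1))
      have hδle : δ k ≤ r - dist x c := this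
      linarith
    have hxmem : x ∈ cube n x (δ k) := by
      rw [cube_eq_closedBall x (hδpos k).le]; exact mem_closedBall_self (hδpos k).le
    have hval : ENNReal.ofReal (⨍ y in closedBall x (δ k), |b y|)
        = (volume (cube n x (δ k)))⁻¹ * ∫⁻ y in cube n x (δ k), ENNReal.ofReal |b y| := by
      rw [cube_eq_closedBall x (hδpos k).le]
      exact ofReal_avg
        (by rw [← cube_eq_closedBall x (hδpos k).le]; exact volume_cube_ne_zero x (hδpos k))
        (by rw [← cube_eq_closedBall x (hδpos k).le]; exact volume_cube_ne_top x (hδpos k).le)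
        (hb.integrableOn_isCompact (isCompact_closedBall x (δ k)))
    rw [hval]
    exact le_iSup_of_le x (le_iSup_of_le (δ k) (le_iSup_of_le (hδpos k)
      (le_iSup_of_le hBsub (le_iSup_of_le hxmem le_rfl))))
  have hcommon : ∀ᵐ x ∂volume.restrict Q,
      |b1 x - (locMax n c r b1 x).toReal| ≤ |g x| ∧
      |b2 x - (locMax n c r b2 x).toReal| ≤ |g x| := by
    filter_upwards [ae_restrict_mem hQmeas, ae_restrict_of_ae hfin1, ae_restrict_of_ae hfin2,
      hdiff b1 hb1, hdiff b2 hb2] with x hxQ hM1 hM2 hd1 hd2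
    have hL1M1 : locMax n c r b1 x ≤ biMax n (fun y => b1 y * χ y) χ x := hLM1 x hxQ
    have hL2M2 : locMax n c r b2 x ≤ biMax n χ (fun y => b2 y * χ y) x := hLM2 x hxQ
    have hL1top : locMax n c r b1 x ≠ ⊤ := ne_top_of_le_ne_top hM1 hL1M1
    have hL2top : locMax n c r b2 x ≠ ⊤ := ne_top_of_le_ne_top hM2 hL2M2
    have hb1le : b1 x ≤ (locMax n c r b1 x).toReal := by
      have h := ENNReal.toReal_mono hL1top hd1
      rw [ENNReal.toReal_ofReal (abs_nonneg _)] at h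
      exact le_trans (le_abs_self _) h
    have hb2le : b2 x ≤ (locMax n c r b2 x).toReal := by
      have h := ENNReal.toReal_mono hL2top hd2
      rw [ENNReal.toReal_ofReal (abs_nonneg _)] at h
      exact le_trans (le_abs_self _) h
    have h1' : (locMax n c r b1 x).toReal ≤ (biMax n (fun y => b1 y * χ y) χ x).toReal :=
      ENNReal.toReal_mono hM1 hL1M1
    have h2' : (locMax n c r b2 x).toReal ≤ (biMax n χ (fun y => b2 y * χ y) x).toReal :=
      ENNReal.toReal_mono hM2 hL2M2
    have hgx : g x = (b1 x + b2 x) - (biMax n (fun y => b1 y * χ y) χ x).toReal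
        - (biMax n χ (fun y => b2 y * χ y) x).toReal := by
      rw [hg]
      unfold biMaxCommutator
      rw [hMχχ x hxQ]
      norm_num
    have habs : -(g x) ≤ |g x| := neg_le_abs _
    constructor
    · rw [abs_of_nonpos (by linarith)]; linarith
    · rw [abs_of_nonpos (by linarith)]; linarith
  have hpq : Real.HolderConjugate p (Real.conjExponent p) :=
    Real.HolderConjugate.conjExponent hp
  constructor
  · exact biMax_finish volume Q (fun x => b1 x - (locMax n c r b1 x).toReal) g hpq hK h0 htop
      (hcommon.mono fun x hx => hx.1) hgbound
  · exact biMax_finish volume Q (fun x => b2 x - (locMax n c r b2 x).toReal) g hpq hK h0 htop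
      (hcommon.mono fun x hx => hx.2) hgbound
end
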